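/- Let q ≥ 3 be an integer and S a 2-element vertex set. If F = FakeEdge_q(S), then e(F) ≡ +1 (mod C(q,2)), d_F(v) ≡ +1 (mod q−1) for every v ∈ S, and d_F(v) ≡ 0 (mod q−1) for every v ∈ V(F)∖S. -/

import Mathlib

/-- The vertex type of the fake-edge gadget: the `q` core vertices (the two
roots are those with values `0` and `1`, the other `q-2` are the new vertices
`x₁,…,x_{q-2}`), together with `q-2` anti-edge vertices for each pair of core
vertices. -/
abbrev FakeVert (q : ℕ) := Fin q ⊕ (Sym2 (Fin q) × Fin (q - 2))

/-- A pair of core vertices is valid if it is a non-diagonal pair other than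
the root pair `{0,1}`. -/
def ValidPair (q : ℕ) (f : Sym2 (Fin q)) : Prop :=
  ¬f.IsDiag ∧ ∃ v ∈ f, 2 ≤ v.val

/-- The fake-edge gadget `FakeEdge_q(S)`: for each valid pair `T` of core
vertices (every pair except the root pair `S = {0,1}`), an anti-edge
`AntiEdge_q(T)` is attached, i.e. `q-2` new vertices joined to each other and
to the two vertices of `T`. -/
def fakeEdge (q : ℕ) : SimpleGraph (FakeVert q) :=
  SimpleGraph.fromRel (fun a b =>
    (∃ (u : Fin q) (f : Sym2 (Fin q)) (i : Fin (q - 2)),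
        a = Sum.inl u ∧ b = Sum.inr (f, i) ∧ ValidPair q f ∧ u ∈ f) ∨
    (∃ (f : Sym2 (Fin q)) (i j : Fin (q - 2)),
        a = Sum.inr (f, i) ∧ b = Sum.inr (f, j) ∧ ValidPair q f ∧ i ≠ j))

open Finset

namespace FakeAux

noncomputable instance (q : ℕ) : DecidablePred (ValidPair q) := Classical.decPred _
noncomputable instance (q : ℕ) : DecidableRel (fakeEdge q).Adj := Classical.decRel _

variable {q : ℕ}

lemma validPair_mk {v w : Fin q} :
    ValidPair q s(v, w) ↔ v ≠ w ∧ (2 ≤ v.val ∨ 2 ≤ w.val) := by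
  unfold ValidPair
  simp only [Sym2.mk_isDiag_iff, Sym2.mem_iff]
  aesop

lemma adj_inl_iff (v : Fin q) (b : FakeVert q) :
    (fakeEdge q).Adj (Sum.inl v) b ↔
      ∃ f i, b = Sum.inr (f, i) ∧ ValidPair q f ∧ v ∈ f := by
  simp only [fakeEdge, SimpleGraph.fromRel_adj]
  constructor
  · rintro ⟨hne, h | h⟩ <;>
      rcases h with (⟨u, f, i, h1, h2, hf, hm⟩ | ⟨f, i, j, h1, h2, hf, hij⟩) <;>
      first
        | (cases h1; cases h2; exact ⟨f, i, rfl, hf, hm⟩)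
        | (exact absurd h1 (by simp))
        | (exact absurd h2 (by simp))
  · rintro ⟨f, i, rfl, hf, hm⟩
    exact ⟨by simp, Or.inl (Or.inl ⟨v, f, i, rfl, rfl, hf, hm⟩)⟩

lemma adj_inr_iff (f : Sym2 (Fin q)) (i : Fin (q - 2)) (b : FakeVert q) :
    (fakeEdge q).Adj (Sum.inr (f, i)) b ↔
      (∃ u, b = Sum.inl u ∧ ValidPair q f ∧ u ∈ f) ∨
      (∃ j, b = Sum.inr (f, j) ∧ ValidPair q f ∧ j ≠ i) := by
  simp only [fakeEdge, SimpleGraph.fromRel_adj]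
  constructor
  · rintro ⟨hne, h | h⟩ <;>
      rcases h with (⟨u, g, k, h1, h2, hf, hm⟩ | ⟨g, k, l, h1, h2, hf, hkl⟩)
    · exact absurd h1 (by simp)
    · obtain ⟨rfl, rfl⟩ : g = f ∧ k = i := by
        simp only [Sum.inr.injEq, Prod.mk.injEq] at h1; exact ⟨h1.1.symm, h1.2.symm⟩
      cases h2
      exact Or.inr ⟨l, rfl, hf, Ne.symm hkl⟩
    · cases h1
      obtain ⟨rfl, rfl⟩ : g = f ∧ k = i := by
        simp only [Sum.inr.injEq, Prod.mk.injEq] at h2; exact ⟨h2.1.symm, h2.2.symm⟩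
      exact Or.inl ⟨u, rfl, hf, hm⟩
    · cases h1
      obtain ⟨rfl, rfl⟩ : g = f ∧ l = i := by
        simp only [Sum.inr.injEq, Prod.mk.injEq] at h2; exact ⟨h2.1.symm, h2.2.symm⟩
      exact Or.inr ⟨k, rfl, hf, hkl⟩
  · rintro (⟨u, rfl, hf, hm⟩ | ⟨j, rfl, hf, hij⟩)
    · exact ⟨by simp, Or.inr (Or.inl ⟨u, f, i, rfl, rfl, hf, hm⟩)⟩
    · exact ⟨by simp [Ne.symm hij], Or.inl (Or.inr ⟨f, i, j, rfl, rfl, hf, Ne.symm hij⟩)⟩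


lemma card_filter_val_ge (q a : ℕ) :
    ((univ : Finset (Fin q)).filter fun w => a ≤ w.val).card = q - a := by
  rw [Finset.card_filter, Fin.sum_univ_eq_sum_range (fun i => if a ≤ i then 1 else 0),
    ← Finset.card_filter]
  have h : (Finset.range q).filter (fun i => a ≤ i) = Finset.Ico a q := by
    ext i; simp [Finset.mem_Ico, and_comm]
  rw [h, Nat.card_Ico]

lemma inj_mk (v : Fin q) : Function.Injective (fun w : Fin q => s(v, w)) :=
  fun _ _ h => Sym2.congr_right.mp h

lemma filter_valid_mem_low (v : Fin q) (hv : v.val ≤ 1) :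
    (univ.filter fun f : Sym2 (Fin q) => ValidPair q f ∧ v ∈ f)
      = (univ.filter fun w : Fin q => 2 ≤ w.val).image (fun w => s(v, w)) := by
  ext f
  simp only [mem_filter, mem_univ, true_and, mem_image]
  constructor
  · rintro ⟨hf, hm⟩
    obtain ⟨w, rfl⟩ := Sym2.mem_iff_exists.mp hm
    rw [validPair_mk] at hf
    refine ⟨w, ?_, rfl⟩
    rcases hf.2 with h | h
    · omega
    · exact h
  · rintro ⟨w, hw, rfl⟩
    refine ⟨validPair_mk.mpr ⟨?_, Or.inr hw⟩, Sym2.mem_mk_left v w⟩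
    intro h; rw [h] at hv; omega
lemma filter_valid_mem_high (v : Fin q) (hv : 2 ≤ v.val) :
    (univ.filter fun f : Sym2 (Fin q) => ValidPair q f ∧ v ∈ f)
      = (univ.filter fun w : Fin q => w ≠ v).image (fun w => s(v, w)) := by
  ext f
  simp only [mem_filter, mem_univ, true_and, mem_image]
  constructor
  · rintro ⟨hf, hm⟩
    obtain ⟨w, rfl⟩ := Sym2.mem_iff_exists.mp hm
    rw [validPair_mk] at hf
    exact ⟨w, Ne.symm hf.1, rfl⟩
  · rintro ⟨w, hw, rfl⟩
    exact ⟨validPair_mk.mpr ⟨Ne.symm hw, Or.inl hv⟩, Sym2.mem_mk_left v w⟩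

lemma nbhd_inl (v : Fin q) :
    (fakeEdge q).neighborSet (Sum.inl v) =
      ↑((((univ.filter fun f : Sym2 (Fin q) => ValidPair q f ∧ v ∈ f) ×ˢ
          (univ : Finset (Fin (q - 2)))).image
        (Sum.inr : Sym2 (Fin q) × Fin (q - 2) → FakeVert q))) := by
  ext b
  simp only [SimpleGraph.mem_neighborSet, adj_inl_iff, coe_image, Set.mem_image, mem_coe,
    mem_product, mem_filter, mem_univ, true_and, and_true]
  constructor
  · rintro ⟨f, i, rfl, hf, hm⟩; exact ⟨(f, i), ⟨hf, hm⟩, rfl⟩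
  · rintro ⟨⟨f, i⟩, ⟨hf, hm⟩, rfl⟩; exact ⟨f, i, rfl, hf, hm⟩

lemma ncard_nbhd_inl (v : Fin q) :
    ((fakeEdge q).neighborSet (Sum.inl v)).ncard =
      (univ.filter fun f : Sym2 (Fin q) => ValidPair q f ∧ v ∈ f).card * (q - 2) := by
  rw [nbhd_inl, Set.ncard_coe_finset,
    Finset.card_image_of_injective _ Sum.inr_injective, Finset.card_product, Finset.card_univ,
    Fintype.card_fin]

lemma ncard_nbhd_inl_low (v : Fin q) (hv : v.val ≤ 1) :
    ((fakeEdge q).neighborSet (Sum.inl v)).ncard = (q - 2) * (q - 2) := by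
  rw [ncard_nbhd_inl, filter_valid_mem_low v hv,
    Finset.card_image_of_injective _ (inj_mk v), card_filter_val_ge]

lemma ncard_nbhd_inl_high (v : Fin q) (hv : 2 ≤ v.val) :
    ((fakeEdge q).neighborSet (Sum.inl v)).ncard = (q - 1) * (q - 2) := by
  rw [ncard_nbhd_inl, filter_valid_mem_high v hv,
    Finset.card_image_of_injective _ (inj_mk v), Finset.filter_ne',
    Finset.card_erase_of_mem (mem_univ v), Finset.card_univ, Fintype.card_fin]

lemma ncard_nbhd_inr (hq : 3 ≤ q) (f : Sym2 (Fin q)) (i : Fin (q - 2)) :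
    ((fakeEdge q).neighborSet (Sum.inr (f, i))).ncard =
      if ValidPair q f then q - 1 else 0 := by
  induction f using Sym2.ind with
  | _ a b =>
    by_cases hf : ValidPair q s(a, b)
    · rw [if_pos hf]
      have hab : a ≠ b := (validPair_mk.mp hf).1
      have hset : (fakeEdge q).neighborSet (Sum.inr (s(a, b), i)) =
          ↑(({Sum.inl a, Sum.inl b} : Finset (FakeVert q)) ∪
            ((univ.filter fun j : Fin (q - 2) => j ≠ i).image
              fun j => (Sum.inr (s(a, b), j) : FakeVert q))) := by
        ext c
        simp only [SimpleGraph.mem_neighborSet, adj_inr_iff, mem_coe, Finset.mem_union,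
          Finset.mem_insert, Finset.mem_singleton, Finset.mem_image, Finset.mem_filter,
          mem_univ, true_and, Sym2.mem_iff]
        constructor
        · rintro (⟨u, rfl, _, (rfl | rfl)⟩ | ⟨j, rfl, _, hj⟩)
          · exact Or.inl (Or.inl rfl)
          · exact Or.inl (Or.inr rfl)
          · exact Or.inr ⟨j, hj, rfl⟩
        · rintro ((rfl | rfl) | ⟨j, hj, rfl⟩)
          · exact Or.inl ⟨a, rfl, hf, Or.inl rfl⟩
          · exact Or.inl ⟨b, rfl, hf, Or.inr rfl⟩
          · exact Or.inr ⟨j, rfl, hf, hj⟩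
      rw [hset, Set.ncard_coe_finset, Finset.card_union_of_disjoint, Finset.filter_ne',
        Finset.card_image_of_injective _ (fun j₁ j₂ h => by simpa using h),
        Finset.card_erase_of_mem (mem_univ i), Finset.card_univ, Fintype.card_fin,
        Finset.card_insert_of_notMem (by simp [hab]), Finset.card_singleton]
      · omega
      · rw [Finset.disjoint_left]
        intro c hc hc2
        simp only [Finset.mem_insert, Finset.mem_singleton] at hc
        rcases hc with rfl | rfl <;> simp at hc2
    · rw [if_neg hf]
      have hset : (fakeEdge q).neighborSet (Sum.inr (s(a, b), i)) = ∅ := by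
        ext c
        simp only [SimpleGraph.mem_neighborSet, adj_inr_iff, Set.mem_empty_iff_false, iff_false]
        rintro (⟨u, rfl, hv, _⟩ | ⟨j, rfl, hv, _⟩) <;> exact hf hv
      rw [hset, Set.ncard_empty]

lemma valid_iff_ne (hq : 3 ≤ q) (f : Sym2 (Fin q)) :
    ValidPair q f ↔
      ¬f.IsDiag ∧ f ≠ s((⟨0, by omega⟩ : Fin q), (⟨1, by omega⟩ : Fin q)) := by
  induction f using Sym2.ind with
  | _ a b =>
    rw [validPair_mk]
    simp only [ne_eq, Sym2.mk_isDiag_iff, Sym2.eq_iff, Fin.ext_iff, Fin.val_mk]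
    have ha := a.isLt
    have hb := b.isLt
    constructor
    · rintro ⟨h1, h2⟩
      exact ⟨by omega, by omega⟩
    · rintro ⟨h1, h2⟩
      exact ⟨by omega, by omega⟩

lemma card_filter_valid (hq : 3 ≤ q) :
    (univ.filter fun f : Sym2 (Fin q) => ValidPair q f).card = q.choose 2 - 1 := by
  have h0 : (univ.filter fun f : Sym2 (Fin q) => ¬f.IsDiag).card = q.choose 2 := by
    rw [← Fintype.card_subtype, Sym2.card_subtype_not_diag, Fintype.card_fin]
  have key : (univ.filter fun f : Sym2 (Fin q) => ValidPair q f)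
      = (univ.filter fun f : Sym2 (Fin q) => ¬f.IsDiag).erase
          s((⟨0, by omega⟩ : Fin q), (⟨1, by omega⟩ : Fin q)) := by
    ext f
    rw [Finset.mem_erase, Finset.mem_filter, Finset.mem_filter, valid_iff_ne hq]
    tauto
  rw [key, Finset.card_erase_of_mem, h0]
  rw [Finset.mem_filter]
  refine ⟨mem_univ _, ?_⟩
  rw [Sym2.mk_isDiag_iff]
  intro h
  have := Fin.ext_iff.mp h
  simp at this

lemma degree_eq_ncard (v : FakeVert q) :
    (fakeEdge q).degree v = ((fakeEdge q).neighborSet v).ncard := by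
  rw [SimpleGraph.degree, SimpleGraph.neighborFinset_def, Set.ncard_eq_toFinset_card']

lemma two_mul_choose (m : ℕ) : 2 * Nat.choose (m + 3) 2 = (m + 3) * (m + 2) := by
  have hd : 2 ∣ (m + 3) * (m + 2) := by
    have := Nat.even_mul_succ_self (m + 2)
    rw [even_iff_two_dvd] at this
    calc 2 ∣ (m + 2) * (m + 3) := this
    _ = (m + 3) * (m + 2) := by ring
  rw [Nat.choose_two_right]
  norm_num
  exact Nat.mul_div_cancel' hd

lemma edge_count (m : ℕ) :
    (fakeEdge (m + 3)).edgeSet.ncard =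
      ((m + 3).choose 2 - 1) * ((m + 3).choose 2 - 1) := by
  classical
  have hn := two_mul_choose m
  have hn6 : (m + 3) * (m + 2) = m * m + 5 * m + 6 := by ring
  set n := (m + 3).choose 2 with hndef
  obtain ⟨k, hk⟩ : ∃ k, n = k + 1 := ⟨n - 1, by omega⟩
  have hk2 : 2 * k = m * m + 5 * m + 4 := by omega
  have ha : ∀ v : Fin (m + 3), 2 ≤ v.val →
      (fakeEdge (m + 3)).degree (Sum.inl v) = (m + 2) * (m + 1) := by
    intro v hv
    rw [degree_eq_ncard, ncard_nbhd_inl_high v hv]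
    simp
  have hb : ∀ v : Fin (m + 3), ¬ 2 ≤ v.val →
      (fakeEdge (m + 3)).degree (Sum.inl v) = (m + 1) * (m + 1) := by
    intro v hv
    rw [degree_eq_ncard, ncard_nbhd_inl_low v (by omega)]
    simp
  have h1 : ∑ v : Fin (m + 3), (fakeEdge (m + 3)).degree (Sum.inl v)
      = (m + 1) * ((m + 2) * (m + 1)) + 2 * ((m + 1) * (m + 1)) := by
    rw [← Finset.sum_filter_add_sum_filter_not univ (fun v : Fin (m + 3) => 2 ≤ v.val)]
    have hc2 : (univ.filter (fun v : Fin (m + 3) => ¬ 2 ≤ v.val)).card = 2 := by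
      have h := Finset.card_filter_add_card_filter_not
        (s := (univ : Finset (Fin (m + 3)))) (p := fun v : Fin (m + 3) => 2 ≤ v.val)
      rw [card_filter_val_ge, Finset.card_univ, Fintype.card_fin] at h
      omega
    rw [Finset.sum_congr rfl (fun v hv => ha v (Finset.mem_filter.mp hv).2),
      Finset.sum_congr rfl (fun v hv => hb v (Finset.mem_filter.mp hv).2),
      Finset.sum_const, Finset.sum_const, card_filter_val_ge, hc2, smul_eq_mul, smul_eq_mul]
    simp
  have hdeg2 : ∀ p : Sym2 (Fin (m + 3)) × Fin (m + 3 - 2),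
      (fakeEdge (m + 3)).degree (Sum.inr p)
        = if ValidPair (m + 3) p.1 then m + 2 else 0 := by
    intro p
    rw [degree_eq_ncard, ncard_nbhd_inr (by omega) p.1 p.2]
    simp
  have h2 : ∑ p : Sym2 (Fin (m + 3)) × Fin (m + 3 - 2),
      (fakeEdge (m + 3)).degree (Sum.inr p) = k * ((m + 1) * (m + 2)) := by
    calc ∑ p : Sym2 (Fin (m + 3)) × Fin (m + 3 - 2), (fakeEdge (m + 3)).degree (Sum.inr p)
        = ∑ p : Sym2 (Fin (m + 3)) × Fin (m + 3 - 2),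
            if ValidPair (m + 3) p.1 then m + 2 else 0 :=
          Finset.sum_congr rfl (fun p _ => hdeg2 p)
      _ = ∑ f : Sym2 (Fin (m + 3)), ∑ _i : Fin (m + 3 - 2),
            if ValidPair (m + 3) f then m + 2 else 0 := by
          rw [Fintype.sum_prod_type]
      _ = ∑ f : Sym2 (Fin (m + 3)),
            if ValidPair (m + 3) f then (m + 1) * (m + 2) else 0 := by
          refine Finset.sum_congr rfl (fun f _ => ?_)
          rw [Finset.sum_const, Finset.card_univ, Fintype.card_fin, smul_eq_mul, mul_ite,
            mul_zero]
          simp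
      _ = ((univ.filter fun f : Sym2 (Fin (m + 3)) => ValidPair (m + 3) f)).card
            * ((m + 1) * (m + 2)) := by
          rw [Finset.sum_ite, Finset.sum_const, Finset.sum_const_zero, add_zero, smul_eq_mul]
      _ = k * ((m + 1) * (m + 2)) := by
          rw [card_filter_valid (by omega)]
          congr 1
          omega
  have hhs := SimpleGraph.sum_degrees_eq_twice_card_edges (fakeEdge (m + 3))
  rw [Fintype.sum_sum_type, h1, h2] at hhs
  have hE : (fakeEdge (m + 3)).edgeSet.ncard = (fakeEdge (m + 3)).edgeFinset.card := by
    rw [← SimpleGraph.coe_edgeFinset, Set.ncard_coe_finset]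
  have key : (m + 1) * ((m + 2) * (m + 1)) + 2 * ((m + 1) * (m + 1))
      + k * ((m + 1) * (m + 2)) = 2 * (k * k) := by
    zify at hk2 ⊢
    linear_combination (-(k : ℤ) - (m + 1)) * hk2
  have hnk : n - 1 = k := by omega
  rw [hE, hnk]
  omega

end FakeAux

/-- Divisibility properties of the fake edge: for `q ≥ 3` and
`F = FakeEdge_q(S)`, `e(F) ≡ 1 (mod C(q,2))`, `d_F(v) ≡ 1 (mod q-1)` for the
two root vertices `v ∈ S`, and `d_F(v) ≡ 0 (mod q-1)` for every other vertex
of `F`. -/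
theorem fakeEdge_divisibility (q : ℕ) (hq : 3 ≤ q) :
    ((fakeEdge q).edgeSet.ncard ≡ 1 [MOD q.choose 2]) ∧
    (∀ v : Fin q, v.val ≤ 1 →
      ((fakeEdge q).neighborSet (Sum.inl v)).ncard ≡ 1 [MOD q - 1]) ∧
    (∀ v : Fin q, 2 ≤ v.val →
      ((fakeEdge q).neighborSet (Sum.inl v)).ncard ≡ 0 [MOD q - 1]) ∧
    (∀ x : Sym2 (Fin q) × Fin (q - 2),
      ((fakeEdge q).neighborSet (Sum.inr x)).ncard ≡ 0 [MOD q - 1]) := by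
  obtain ⟨m, rfl⟩ : ∃ m, q = m + 3 := ⟨q - 3, by omega⟩
  refine ⟨?_, ?_, ?_, ?_⟩
  · rw [FakeAux.edge_count m]
    have hn := FakeAux.two_mul_choose m
    have hn6 : (m + 3) * (m + 2) = m * m + 5 * m + 6 := by ring
    set n := (m + 3).choose 2 with hndef
    obtain ⟨k, hk⟩ : ∃ k, n = k + 2 := ⟨n - 2, by omega⟩
    rw [hk]
    show ((k + 1) * (k + 1)) % (k + 2) = 1 % (k + 2)
    have h : (k + 1) * (k + 1) = 1 + (k + 2) * k := by ring
    rw [h, Nat.add_mul_mod_self_left]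
  · intro v hv
    rw [FakeAux.ncard_nbhd_inl_low v hv]
    show ((m + 1) * (m + 1)) % (m + 2) = 1 % (m + 2)
    have h : (m + 1) * (m + 1) = 1 + (m + 2) * m := by ring
    rw [h, Nat.add_mul_mod_self_left]
  · intro v hv
    rw [FakeAux.ncard_nbhd_inl_high v hv]
    show ((m + 2) * (m + 1)) % (m + 2) = 0 % (m + 2)
    simp [Nat.mul_mod_right]
  · intro x
    obtain ⟨f, i⟩ := x
    rw [FakeAux.ncard_nbhd_inr (by omega) f i]
    by_cases h : ValidPair (m + 3) f
    · rw [if_pos h]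
      show (m + 2) % (m + 2) = 0 % (m + 2)
      simp
    · rw [if_neg h]
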